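/- If a counting function f satisfies f(x,y) ≥ f(x,y') whenever y ≤ y', and f(x+z, y+z) ≥ f(x,y) for every positive integer z, then the associated counting rule r_f satisfies weak support monotonicity without population increase: if W is winning for E and G ⊆ W is nonempty, and voter i with A_i ∩ G = ∅ adds all candidates of G to her ballot, then some winning committee of the new election intersects G; moreover if every winning committee of E contains G then every winning committee of the new election intersects G. -/
import Mathlib


open Finset

variable {C : Type*} [Fintype C] [DecidableEq C]

/-- Total score of committee `W` under counting function `f` and approval profile `A`. -/
def countScore {V : Type*} [Fintype V] (f : ℕ → ℕ → ℝ) (A : V → Finset C)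
    (W : Finset C) : ℝ :=
  ∑ i, f ((A i ∩ W).card) ((A i).card)

/-- `W` is a winning committee of the counting rule `r_f` for the election `(A, k)`. -/
def isCountWinner {V : Type*} [Fintype V] (f : ℕ → ℕ → ℝ) (A : V → Finset C) (k : ℕ)
    (W : Finset C) : Prop :=
  W.card = k ∧ ∀ W' : Finset C, W'.card = k → countScore f A W' ≤ countScore f A W

/-- Under the stated extra conditions on the counting function `f`, the rule `r_f`
satisfies weak support monotonicity without population increase. -/
theorem counting_rule_weak_SMWOPI {V : Type*} [Fintype V] [DecidableEq V]
    (f : ℕ → ℕ → ℝ) (hf : ∀ x x' y, x' ≤ x → f x' y ≤ f x y)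
    (hf2 : ∀ x y y', y ≤ y' → f x y' ≤ f x y)
    (hf3 : ∀ x y z : ℕ, 0 < z → f x y ≤ f (x + z) (y + z))
    (A : V → Finset C) (k : ℕ) (hk : 1 ≤ k) (hkC : k ≤ Fintype.card C)
    (G : Finset C) (hG : G.Nonempty) (hGk : G.card ≤ k)
    (i : V) (hiG : A i ∩ G = ∅)
    (W : Finset C) (hW : isCountWinner f A k W) (hGW : G ⊆ W) :
    (∃ W' : Finset C, isCountWinner f (Function.update A i (A i ∪ G)) k W' ∧
        (W' ∩ G).Nonempty) ∧
    ((∀ W₀ : Finset C, isCountWinner f A k W₀ → G ⊆ W₀) →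
      ∀ W' : Finset C, isCountWinner f (Function.update A i (A i ∪ G)) k W' →
        (W' ∩ G).Nonempty) := by
  classical
  set A' := Function.update A i (A i ∪ G) with hA'
  have hdisj : Disjoint (A i) G := Finset.disjoint_iff_inter_eq_empty.mpr hiG
  have hcardUG : (A i ∪ G).card = (A i).card + G.card :=
    Finset.card_union_of_disjoint hdisj
  have hGpos : 0 < G.card := Finset.card_pos.mpr hG
  -- If X is disjoint from G, its score can only go down
  have key1 : ∀ X : Finset C, X ∩ G = ∅ → countScore f A' X ≤ countScore f A X := by
    intro X hX
    apply Finset.sum_le_sum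
    intro j _
    by_cases hj : j = i
    · subst hj
      simp only [hA', Function.update_self]
      have hGX : G ∩ X = ∅ := by rwa [Finset.inter_comm] at hX
      have hUX : (A j ∪ G) ∩ X = A j ∩ X := by
        rw [Finset.union_inter_distrib_right, hGX, Finset.union_empty]
      rw [hUX, hcardUG]
      exact hf2 _ _ _ (Nat.le_add_right _ _)
    · simp [hA', Function.update_of_ne hj]
  -- The score of W can only go up
  have key2 : countScore f A W ≤ countScore f A' W := by
    apply Finset.sum_le_sum
    intro j _
    by_cases hj : j = i
    · subst hj
      simp only [hA', Function.update_self]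
      have h1 : (A j ∪ G) ∩ W = (A j ∩ W) ∪ G := by
        rw [Finset.union_inter_distrib_right, Finset.inter_eq_left.mpr hGW]
      have h2 : ((A j ∩ W) ∪ G).card = (A j ∩ W).card + G.card :=
        Finset.card_union_of_disjoint
          (Finset.disjoint_of_subset_left Finset.inter_subset_left hdisj)
      rw [h1, h2, hcardUG]
      exact hf3 _ _ _ hGpos
    · simp [hA', Function.update_of_ne hj]
  -- A winner for A' exists
  have hexists : ∃ Wm : Finset C, isCountWinner f A' k Wm := by
    have hne : (Finset.univ.powersetCard k (α := C)).Nonempty := by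
      rw [Finset.powersetCard_nonempty]
      simpa using hkC
    obtain ⟨Wm, hWm, hmax⟩ :=
      Finset.exists_max_image (Finset.univ.powersetCard k) (countScore f A') hne
    refine ⟨Wm, ?_, ?_⟩
    · simpa [Finset.mem_powersetCard_univ] using hWm
    · intro W'' hW''
      exact hmax W'' (by simpa [Finset.mem_powersetCard_univ] using hW'')
  have hWG : (W ∩ G).Nonempty := by
    rwa [Finset.inter_eq_right.mpr hGW]
  constructor
  · obtain ⟨Wm, hWm⟩ := hexists
    by_cases hmG : (Wm ∩ G).Nonempty
    · exact ⟨Wm, hWm, hmG⟩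
    · have hmGe : Wm ∩ G = ∅ := Finset.not_nonempty_iff_eq_empty.mp hmG
      refine ⟨W, ⟨hW.1, fun W'' hW'' => ?_⟩, hWG⟩
      calc countScore f A' W'' ≤ countScore f A' Wm := hWm.2 W'' hW''
        _ ≤ countScore f A Wm := key1 Wm hmGe
        _ ≤ countScore f A W := hW.2 Wm hWm.1
        _ ≤ countScore f A' W := key2
  · intro hall W' hW'
    by_contra hmG
    have hmGe : W' ∩ G = ∅ := Finset.not_nonempty_iff_eq_empty.mp hmG
    have hle1 : countScore f A' W' ≤ countScore f A W' := key1 W' hmGe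
    have hle2 : countScore f A W' ≤ countScore f A W := hW.2 W' hW'.1
    have hle3 : countScore f A W ≤ countScore f A' W := key2
    have hle4 : countScore f A' W ≤ countScore f A' W' := hW'.2 W hW.1
    have hEq : countScore f A W = countScore f A W' :=
      le_antisymm (hle3.trans (hle4.trans hle1)) hle2
    have hwin : isCountWinner f A k W' :=
      ⟨hW'.1, fun W'' hW'' => (hW.2 W'' hW'').trans (le_of_eq hEq)⟩
    have := hall W' hwin
    have : (W' ∩ G).Nonempty := by
      rwa [Finset.inter_eq_right.mpr this]
    exact hmG this
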